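/- arXiv:2002.07559 — 4 statements merged into one kernel-verified Lean document; each statement's English description precedes it below -/
import Mathlib

section
/- Let μ be a Borel probability measure on ℚ_p, and suppose for some n ∈ ℤ and all x with |x|_p = p^{-n} the measure ν = μ * μ₋ satisfies ν(B(x, p^{-k})) = 0 for all k ≥ n+1 (i.e., the sphere S(0, p^{-n}) consists of zeros of the distribution μ*μ₋). Then for any ξ ∈ ℚ_p, any x with |x|_p = p^{-n}, and any k ≥ n+1: μ(B(ξ, p^{-k})) · μ(B(ξ - x, p^{-k})) = 0. -/
open MeasureTheory

/-- If the sphere `S(0, p^{-n})` consists of zeros of `μ * μ₋` (where `μ₋` is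
the reflection of `μ`), then for every `ξ`, every `x` with `|x|_p = p^{-n}` and
every `k ≥ n+1`, `μ(B(ξ, p^{-k})) · μ(B(ξ - x, p^{-k})) = 0`. -/
theorem stmt11 (p : ℕ) [Fact p.Prime] [MeasurableSpace ℚ_[p]] [BorelSpace ℚ_[p]]
    (μ : Measure ℚ_[p]) [IsProbabilityMeasure μ] (n : ℤ)
    (hzero : ∀ x : ℚ_[p], ‖x‖ = (p : ℝ) ^ (-n) → ∀ k : ℤ, n + 1 ≤ k →
      Measure.map (fun q : ℚ_[p] × ℚ_[p] => q.1 + q.2)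
          (μ.prod (Measure.map (fun y : ℚ_[p] => -y) μ))
        {z : ℚ_[p] | ‖z - x‖ ≤ (p : ℝ) ^ (-k)} = 0) :
    ∀ (ξ x : ℚ_[p]), ‖x‖ = (p : ℝ) ^ (-n) → ∀ k : ℤ, n + 1 ≤ k →
      μ {z : ℚ_[p] | ‖z - ξ‖ ≤ (p : ℝ) ^ (-k)} *
        μ {z : ℚ_[p] | ‖z - (ξ - x)‖ ≤ (p : ℝ) ^ (-k)} = 0 := by
  intro ξ x hx k hk
  set r : ℝ := (p : ℝ) ^ (-k) with hr
  have hball : ∀ c : ℚ_[p], MeasurableSet {z : ℚ_[p] | ‖z - c‖ ≤ r} := by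
    intro c
    exact (isClosed_le (by fun_prop) continuous_const).measurableSet
  have hν := hzero x hx k hk
  have hmap : MeasurableSet {z : ℚ_[p] | ‖z - x‖ ≤ r} := hball x
  rw [Measure.map_apply (by fun_prop) hmap] at hν
  set S1 : Set ℚ_[p] := {z : ℚ_[p] | ‖z - ξ‖ ≤ r}
  set S2 : Set ℚ_[p] := {z : ℚ_[p] | ‖z + (ξ - x)‖ ≤ r}
  have hS2 : MeasurableSet S2 := by
    exact (isClosed_le (by fun_prop) continuous_const).measurableSet
  have hsub : S1 ×ˢ S2 ⊆ (fun q : ℚ_[p] × ℚ_[p] => q.1 + q.2) ⁻¹' {z : ℚ_[p] | ‖z - x‖ ≤ r} := by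
    rintro ⟨y, z⟩ ⟨hy, hz⟩
    simp only [Set.mem_preimage, Set.mem_setOf_eq]
    have : y + z - x = (y - ξ) + (z + (ξ - x)) := by ring
    rw [this]
    exact le_trans (Padic.nonarchimedean _ _) (max_le hy hz)
  have hle : (μ.prod (Measure.map (fun y : ℚ_[p] => -y) μ)) (S1 ×ˢ S2) = 0 :=
    le_antisymm (hν ▸ measure_mono hsub) zero_le
  rw [Measure.prod_prod, Measure.map_apply (by fun_prop) hS2] at hle
  have : (fun y : ℚ_[p] => -y) ⁻¹' S2 = {z : ℚ_[p] | ‖z - (ξ - x)‖ ≤ r} := by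
    ext z
    simp only [Set.mem_preimage, Set.mem_setOf_eq, S2]
    rw [show -z + (ξ - x) = -(z - (ξ - x)) by ring, norm_neg]
  rw [this] at hle
  exact hle
end

section
/- Let p be prime and let H = (e^{2πi c d / p^γ})_{c∈C, d∈D} be a square complex Hadamard matrix indexed by finite sets C, D ⊂ ℤ/p^γℤ with 0 ∈ C. Then the columns of the matrix H* obtained by deleting the row indexed by 0 sum to the zero vector, and any #D − 1 of these columns are linearly independent over ℂ; consequently the kernel of H* is the one-dimensional span of the all-ones vector. -/
open scoped BigOperators
open Matrix

/-- The entry `e^{2πi c d / p^γ}` of the matrix `H`, for `c, d ∈ ℤ/p^γℤ`. -/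
noncomputable def hadEntry (p γ : ℕ) (c d : ZMod (p ^ γ)) : ℂ :=
  Complex.exp (2 * Real.pi * Complex.I * (((c * d).val : ℕ) : ℂ) / ((p : ℂ) ^ γ))

/-- Let `H = (e^{2πi cd/p^γ})_{c∈C,d∈D}` be a square complex Hadamard matrix
with `0 ∈ C`, and let `H*` be obtained by deleting the row indexed by `0`. Then
the columns of `H*` sum to zero, any `#D - 1` of them are linearly independent,
and the kernel of `H*` is the one-dimensional span of the all-ones vector. -/
theorem stmt13 (p γ : ℕ) (hp : p.Prime) (C D : Finset (ZMod (p ^ γ)))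
    (h0 : (0 : ZMod (p ^ γ)) ∈ C) (hcard : C.card = D.card)
    (hHad : ∀ c ∈ C, ∀ c' ∈ C,
      ∑ d ∈ D, hadEntry p γ c d * (starRingEnd ℂ) (hadEntry p γ c' d)
        = if c = c' then (C.card : ℂ) else 0) :
    (∀ c ∈ C, c ≠ 0 → ∑ d ∈ D, hadEntry p γ c d = 0) ∧
    (∀ d₀ ∈ D, LinearIndependent ℂ
      (fun d : ↥(D.erase d₀) => fun c : ↥(C.erase 0) =>
        hadEntry p γ (c : ZMod (p ^ γ)) (d : ZMod (p ^ γ)))) ∧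
    (∀ u : ↥D → ℂ,
      (∀ c ∈ C, c ≠ 0 → ∑ d ∈ D.attach, hadEntry p γ c (d : ZMod (p ^ γ)) * u d = 0) ↔
      ∃ a : ℂ, ∀ d : ↥D, u d = a) := by
  classical
  haveI : NeZero (p ^ γ) := ⟨pow_ne_zero γ hp.ne_zero⟩
  have had0 : ∀ d : ZMod (p ^ γ), hadEntry p γ 0 d = 1 := by
    intro d; simp [hadEntry]
  have hncard : ((C.card : ℂ)) ≠ 0 := by
    have : C.card ≠ 0 := Finset.card_ne_zero.mpr ⟨0, h0⟩
    exact_mod_cast Nat.cast_ne_zero.mpr this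
  -- Part 1
  have key1 : ∀ c ∈ C, c ≠ 0 → ∑ d ∈ D, hadEntry p γ c d = 0 := by
    intro c hc hc0
    have := hHad c hc 0 h0
    simpa [had0, hc0] using this
  -- Column orthogonality
  have colOrth : ∀ d ∈ D, ∀ d' ∈ D,
      ∑ c ∈ C, (starRingEnd ℂ) (hadEntry p γ c d) * hadEntry p γ c d'
        = if d = d' then (C.card : ℂ) else 0 := by
    set A : Matrix ↥C ↥D ℂ := fun c d => hadEntry p γ (c : ZMod (p ^ γ)) (d : ZMod (p ^ γ))
      with hA
    have hAA : A * Aᴴ = (C.card : ℂ) • (1 : Matrix ↥C ↥C ℂ) := by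
      ext c c'
      simp only [Matrix.mul_apply, Matrix.conjTranspose_apply]
      simp only [Matrix.mul_apply, Matrix.conjTranspose_apply, Matrix.smul_apply,
        Matrix.one_apply, smul_eq_mul, mul_ite, mul_one, mul_zero, hA,
        ← starRingEnd_apply, Finset.univ_eq_attach]
      rw [Finset.sum_attach D
        (fun d => hadEntry p γ c d * (starRingEnd ℂ) (hadEntry p γ (c' : ZMod (p^γ)) d)),
        hHad c c.2 c' c'.2]
      rcases eq_or_ne c c' with h | h
      · simp [h]
      · rw [if_neg (fun hh => h (Subtype.ext hh)), if_neg h]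
    have e : ↥C ≃ ↥D := Fintype.equivOfCardEq (by simp [hcard])
    have hAB : A * ((C.card : ℂ)⁻¹ • Aᴴ) = 1 := by
      rw [Matrix.mul_smul, hAA, smul_smul, inv_mul_cancel₀ hncard, one_smul]
    have hsq : A.submatrix id e * ((C.card : ℂ)⁻¹ • Aᴴ).submatrix e id = 1 := by
      rw [Matrix.submatrix_mul_equiv, hAB, Matrix.submatrix_id_id]
    have hsq' := mul_eq_one_comm.mp hsq
    have hBA : ((C.card : ℂ)⁻¹ • Aᴴ) * A = 1 := by
      have h2 : (((C.card : ℂ)⁻¹ • Aᴴ) * A).submatrix e e = 1 := by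
        rw [← Matrix.submatrix_mul_equiv _ _ _ (Equiv.refl ↥C) _]
        exact hsq'
      ext d d'
      have h3 := congrFun (congrFun h2 (e.symm d)) (e.symm d')
      simp only [Matrix.submatrix_apply, Equiv.apply_symm_apply] at h3
      rw [h3, Matrix.one_apply, Matrix.one_apply]
      simp only [EmbeddingLike.apply_eq_iff_eq]
    have hAHA : Aᴴ * A = (C.card : ℂ) • (1 : Matrix ↥D ↥D ℂ) := by
      calc Aᴴ * A = (C.card : ℂ) • (((C.card : ℂ)⁻¹ • Aᴴ) * A) := by
            rw [Matrix.smul_mul, smul_smul, mul_inv_cancel₀ hncard, one_smul]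
        _ = (C.card : ℂ) • 1 := by rw [hBA]
    intro d hd d' hd'
    have h2 := congrFun (congrFun hAHA ⟨d, hd⟩) ⟨d', hd'⟩
    simp only [Matrix.mul_apply, Matrix.conjTranspose_apply] at h2
    simp only [Matrix.mul_apply, Matrix.conjTranspose_apply, Matrix.smul_apply,
      Matrix.one_apply, smul_eq_mul, mul_ite, mul_one, mul_zero, hA,
      ← starRingEnd_apply, Finset.univ_eq_attach] at h2
    rw [Finset.sum_attach C
      (fun c => (starRingEnd ℂ) (hadEntry p γ c d) * hadEntry p γ c d')] at h2
    rw [h2]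
    rcases eq_or_ne d d' with h | h
    · simp [h]
    · rw [if_neg (fun hh => h (by simpa using congrArg Subtype.val hh)), if_neg h]
  -- Part 3 (kernel characterization)
  have key3 : ∀ u : ↥D → ℂ,
      (∀ c ∈ C, c ≠ 0 → ∑ d ∈ D.attach, hadEntry p γ c (d : ZMod (p ^ γ)) * u d = 0) ↔
      ∃ a : ℂ, ∀ d : ↥D, u d = a := by
    intro u
    constructor
    · intro hu
      set b : ℂ := ∑ d ∈ D.attach, u d with hb
      refine ⟨b / (C.card : ℂ), fun d' => ?_⟩
      have hS : ∑ c ∈ C, (starRingEnd ℂ) (hadEntry p γ c d')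
          * (∑ d ∈ D.attach, hadEntry p γ c d * u d) = b := by
        rw [← Finset.add_sum_erase C (fun c => (starRingEnd ℂ) (hadEntry p γ c (d' : ZMod (p^γ)))
          * (∑ d ∈ D.attach, hadEntry p γ c (d : ZMod (p^γ)) * u d)) h0]
        have hzero : ∑ c ∈ C.erase 0, (starRingEnd ℂ) (hadEntry p γ c (d' : ZMod (p^γ)))
            * (∑ d ∈ D.attach, hadEntry p γ c (d : ZMod (p^γ)) * u d) = 0 :=
          Finset.sum_eq_zero fun c hc => by
            rw [hu c (Finset.mem_of_mem_erase hc) (Finset.ne_of_mem_erase hc), mul_zero]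
        rw [hzero, add_zero]
        simp [had0, hb]
      have hS2 : ∑ c ∈ C, (starRingEnd ℂ) (hadEntry p γ c d')
          * (∑ d ∈ D.attach, hadEntry p γ c d * u d)
          = (C.card : ℂ) * u d' := by
        calc ∑ c ∈ C, (starRingEnd ℂ) (hadEntry p γ c d')
              * (∑ d ∈ D.attach, hadEntry p γ c d * u d)
            = ∑ c ∈ C, ∑ d ∈ D.attach,
                (starRingEnd ℂ) (hadEntry p γ c d') * hadEntry p γ c d * u d := by
              refine Finset.sum_congr rfl fun c _ => ?_
              rw [Finset.mul_sum]
              exact Finset.sum_congr rfl fun d _ => by ring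
          _ = ∑ d ∈ D.attach, ∑ c ∈ C,
                (starRingEnd ℂ) (hadEntry p γ c d') * hadEntry p γ c d * u d :=
              Finset.sum_comm
          _ = ∑ d ∈ D.attach,
                (∑ c ∈ C, (starRingEnd ℂ) (hadEntry p γ c d') * hadEntry p γ c d) * u d := by
              refine Finset.sum_congr rfl fun d _ => ?_
              rw [Finset.sum_mul]
          _ = ∑ d ∈ D.attach, (if d' = d then (C.card : ℂ) else 0) * u d := by
              refine Finset.sum_congr rfl fun d _ => ?_
              rw [colOrth (d' : ZMod (p^γ)) d'.2 (d : ZMod (p^γ)) d.2]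
              congr 1
              simp only [Subtype.ext_iff]
          _ = (C.card : ℂ) * u d' := by
              simp only [ite_mul, zero_mul]
              rw [Finset.sum_ite_eq D.attach d' (fun d => (C.card : ℂ) * u d)]
              simp [Finset.mem_attach]
      rw [hS] at hS2
      rw [eq_div_iff hncard, mul_comm, ← hS2]
    · rintro ⟨a, ha⟩ c hc hc0
      simp only [ha]
      rw [← Finset.sum_mul, Finset.sum_attach D (fun d => hadEntry p γ c d),
        key1 c hc hc0, zero_mul]
  refine ⟨key1, ?_, key3⟩
  intro d₀ hd₀
  rw [Fintype.linearIndependent_iff]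
  intro g hg
  set U : ZMod (p ^ γ) → ℂ := fun x => if h : x ∈ D.erase d₀ then g ⟨x, h⟩ else 0 with hU
  have hgU : ∀ d : ↥(D.erase d₀), U (d : ZMod (p ^ γ)) = g d := by
    intro d
    rw [hU]
    simp only
    rw [dif_pos d.2]
  have hU0 : U d₀ = 0 := by
    rw [hU]; simp
  have hker : ∀ c ∈ C, c ≠ 0 →
      ∑ d ∈ D.attach, hadEntry p γ c (d : ZMod (p ^ γ)) * U (d : ZMod (p ^ γ)) = 0 := by
    intro c hc hc0
    have hc' : c ∈ C.erase 0 := Finset.mem_erase.mpr ⟨hc0, hc⟩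
    have h1 := congrFun hg ⟨c, hc'⟩
    simp only [Finset.sum_apply, Pi.smul_apply, smul_eq_mul, Pi.zero_apply,
      Finset.univ_eq_attach] at h1
    rw [Finset.sum_attach D (fun x => hadEntry p γ c x * U x),
      ← Finset.add_sum_erase D (fun x => hadEntry p γ c x * U x) hd₀,
      hU0, mul_zero, zero_add]
    calc ∑ x ∈ D.erase d₀, hadEntry p γ c x * U x
        = ∑ d ∈ (D.erase d₀).attach, hadEntry p γ c (d : ZMod (p^γ)) * U (d : ZMod (p^γ)) :=
          (Finset.sum_attach _ _).symm
      _ = ∑ d ∈ (D.erase d₀).attach, g d * hadEntry p γ c (d : ZMod (p^γ)) := by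
          refine Finset.sum_congr rfl fun d _ => ?_
          rw [hgU d, mul_comm]
      _ = 0 := h1
  obtain ⟨a, ha⟩ := (key3 (fun d => U (d : ZMod (p ^ γ)))).mp hker
  have ha0 : a = 0 := by
    have := ha ⟨d₀, hd₀⟩
    simp only at this
    rw [hU0] at this
    exact this.symm
  intro j
  rw [← hgU j]
  have hmem : (j : ZMod (p ^ γ)) ∈ D := Finset.mem_of_mem_erase j.2
  have := ha ⟨(j : ZMod (p ^ γ)), hmem⟩
  simp only at this
  rw [this, ha0]
end

section
/- Let p be prime and let ν be a probability measure on ℤ_p that is the weak limit of the measures ν_γ = (1/#C_γ) Σ_{c ∈ C_γ} δ_c, where for each γ the set C_γ ⊂ {0,…,p^γ−1} is p-homogeneous of 𝒯_{I_γ, J_γ}-form with I_γ = I ∩ {0,…,γ−1} for a fixed infinite set I ⊂ ℕ, and the sets are nested (each element of C_{γ+1} reduces mod p^γ to an element of C_γ). Then for every x in the support of ν and every γ ≥ 0: ν(B(x, p^{-γ})) = p^{−#I_γ}, where #I_γ = #(I ∩ {0,…,γ−1}). -/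
open scoped BigOperators
open MeasureTheory Filter

/-- A nonempty set of digit strings `S ⊆ {0,…,p-1}^γ` is of `𝒯_{I,J}`-form
(`J` the complement of `I`): for positions `i ∈ I` the digit `t_i` takes every
value in `{0,…,p-1}` (for each prefix occurring in `S`), while for `i ∉ I` the
digit `t_i` is uniquely determined by the prefix `t_0⋯t_{i-1}`. -/
def IsTIJForm (p γ : ℕ) (I : Set ℕ) (S : Finset (Fin γ → Fin p)) : Prop :=
  S.Nonempty ∧
  (∀ t ∈ S, ∀ t' ∈ S, ∀ i : Fin γ, (i : ℕ) ∉ I →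
      (∀ j : Fin γ, j < i → t j = t' j) → t i = t' i) ∧
  (∀ t ∈ S, ∀ i : Fin γ, (i : ℕ) ∈ I → ∀ a : Fin p,
      ∃ s ∈ S, (∀ j : Fin γ, j < i → s j = t j) ∧ s i = a)

/-- The `p`-adic integer `Σ_i t_i p^i` with digits `t`. -/
noncomputable def digitValZ (p γ : ℕ) [Fact p.Prime] (t : Fin γ → Fin p) : ℤ_[p] :=
  ∑ i : Fin γ, ((t i : ℕ) : ℤ_[p]) * (p : ℤ_[p]) ^ (i : ℕ)

namespace Stmt18Aux

lemma finI (I : Set ℕ) (a b : ℕ) : (I ∩ Set.Ico a b).Finite :=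
  (Set.finite_Ico a b).inter_of_right I

lemma e_step_not {I : Set ℕ} {k m : ℕ} (hkI : k ∉ I) :
    (I ∩ Set.Ico k m).ncard = (I ∩ Set.Ico (k+1) m).ncard := by
  have h : I ∩ Set.Ico k m = I ∩ Set.Ico (k+1) m := by
    ext x; simp only [Set.mem_inter_iff, Set.mem_Ico]
    constructor
    · rintro ⟨hx, h1, h2⟩
      have : x ≠ k := fun e => hkI (e ▸ hx)
      exact ⟨hx, by omega, h2⟩
    · rintro ⟨hx, h1, h2⟩; exact ⟨hx, by omega, h2⟩
  rw [h]

lemma e_step_mem {I : Set ℕ} {k m : ℕ} (hk : k < m) (hkI : k ∈ I) :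
    (I ∩ Set.Ico k m).ncard = (I ∩ Set.Ico (k+1) m).ncard + 1 := by
  have hset : I ∩ Set.Ico k m = insert k (I ∩ Set.Ico (k+1) m) := by
    ext x; simp only [Set.mem_insert_iff, Set.mem_inter_iff, Set.mem_Ico]
    constructor
    · rintro ⟨hx, h1, h2⟩
      rcases eq_or_ne x k with rfl|hne
      · exact Or.inl rfl
      · exact Or.inr ⟨hx, by omega, h2⟩
    · rintro (rfl|⟨hx,h1,h2⟩)
      · exact ⟨hkI, le_rfl, hk⟩
      · exact ⟨hx, by omega, h2⟩
  rw [hset, Set.ncard_insert_of_notMem (by rintro ⟨_, h1, _⟩; omega) (finI I (k+1) m)]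

lemma e_add {I : Set ℕ} {a b c : ℕ} (hab : a ≤ b) (hbc : b ≤ c) :
    (I ∩ Set.Ico a c).ncard = (I ∩ Set.Ico a b).ncard + (I ∩ Set.Ico b c).ncard := by
  rw [← Set.ncard_union_eq (Set.disjoint_left.2 (by rintro x ⟨_, _, h2⟩ ⟨_, h3, _⟩; omega))
    (finI I a b) (finI I b c), ← Set.inter_union_distrib_left,
    Set.Ico_union_Ico_eq_Ico hab hbc]

lemma countA {p γ' : ℕ} {I : Set ℕ} {S : Finset (Fin γ' → Fin p)} (hS : IsTIJForm p γ' I S) :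
    ∀ (d k : ℕ), k + d = γ' → ∀ t ∈ S,
    (S.filter fun s => ∀ j : Fin γ', (j:ℕ) < k → s j = t j).card
      = p ^ (I ∩ Set.Ico k γ').ncard := by
  intro d
  induction d with
  | zero =>
    intro k hk t ht
    obtain rfl : k = γ' := by omega
    have hfil : (S.filter fun s => ∀ j : Fin k, (j:ℕ) < k → s j = t j) = {t} := by
      ext s
      simp only [Finset.mem_filter, Finset.mem_singleton]
      constructor
      · rintro ⟨hs, hP⟩; exact funext fun j => hP j j.isLt
      · rintro rfl; exact ⟨ht, fun j _ => rfl⟩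
    rw [hfil, Set.Ico_self, Set.inter_empty, Set.ncard_empty]
    simp
  | succ d ih =>
    intro k hk t ht
    have hkγ : k < γ' := by omega
    by_cases hkI : k ∈ I
    · have hone : ∀ a : Fin p, ((S.filter fun s => ∀ j : Fin γ', (j:ℕ) < k → s j = t j).filter
            fun s => s ⟨k, hkγ⟩ = a).card = p ^ (I ∩ Set.Ico (k+1) γ').ncard := by
        intro a
        obtain ⟨sa, hsa, hpre, hval⟩ := hS.2.2 t ht ⟨k, hkγ⟩ hkI a
        have heq : ((S.filter fun s => ∀ j : Fin γ', (j:ℕ) < k → s j = t j).filter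
              fun s => s ⟨k, hkγ⟩ = a)
            = S.filter fun s => ∀ j : Fin γ', (j:ℕ) < k+1 → s j = sa j := by
          ext s
          simp only [Finset.mem_filter, and_assoc]
          constructor
          · rintro ⟨hs, hP, hk'⟩
            have h1 : ∀ j : Fin γ', (j:ℕ) < k+1 → s j = sa j := by
              intro j hj
              rcases Nat.lt_or_ge (j:ℕ) k with hjk | hjk
              · rw [hP j hjk]
                exact (hpre j (by simp only [Fin.lt_def]; exact hjk)).symm
              · have hje : j = (⟨k, hkγ⟩ : Fin γ') := by
                  have : (j:ℕ) = k := by omega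
                  exact Fin.ext (by simp [this])
                rw [hje, hk', ← hval]
            exact ⟨hs, h1⟩
          · rintro ⟨hs, hP'⟩
            have h1 : ∀ j : Fin γ', (j:ℕ) < k → s j = t j := by
              intro j hj
              rw [hP' j (by omega)]
              exact hpre j (by simp only [Fin.lt_def]; omega)
            have h2 : s ⟨k, hkγ⟩ = a := by
              rw [hP' ⟨k, hkγ⟩ (by simp)]
              exact hval
            exact ⟨hs, h1, h2⟩
        rw [heq]
        exact ih (k+1) (by omega) sa hsa
      have hfib : (S.filter fun s => ∀ j : Fin γ', (j:ℕ) < k → s j = t j).card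
          = ∑ a : Fin p, ((S.filter fun s => ∀ j : Fin γ', (j:ℕ) < k → s j = t j).filter
            fun s => s ⟨k, hkγ⟩ = a).card :=
        Finset.card_eq_sum_card_fiberwise (fun s _ => Finset.mem_univ _)
      rw [hfib]
      simp only [hone, Finset.sum_const, Finset.card_univ, Fintype.card_fin, smul_eq_mul]
      rw [e_step_mem hkγ hkI, pow_succ]
      ring
    · have heq : (S.filter fun s => ∀ j : Fin γ', (j:ℕ) < k → s j = t j)
          = S.filter fun s => ∀ j : Fin γ', (j:ℕ) < k+1 → s j = t j := by
        ext s
        simp only [Finset.mem_filter]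
        constructor
        · rintro ⟨hs, hP⟩
          have h1 : ∀ j : Fin γ', (j:ℕ) < k+1 → s j = t j := by
            intro j hj
            rcases Nat.lt_or_ge (j:ℕ) k with hjk | hjk
            · exact hP j hjk
            · have hje : j = (⟨k, hkγ⟩ : Fin γ') := by
                have : (j:ℕ) = k := by omega
                exact Fin.ext (by simp [this])
              rw [hje]
              exact hS.2.1 s hs t ht ⟨k, hkγ⟩ hkI
                (fun j' hj' => hP j' (by simpa [Fin.lt_def] using hj'))
          exact ⟨hs, h1⟩
        · rintro ⟨hs, hP⟩
          have h1 : ∀ j : Fin γ', (j:ℕ) < k → s j = t j := by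
            intro j hj
            exact hP j (by omega)
          exact ⟨hs, h1⟩
      rw [heq, ih (k+1) (by omega) t ht, e_step_not hkI]

lemma cardS {p γ' : ℕ} {I : Set ℕ} {S : Finset (Fin γ' → Fin p)} (hS : IsTIJForm p γ' I S) :
    S.card = p ^ (I ∩ Set.Ico 0 γ').ncard := by
  obtain ⟨t, ht⟩ := hS.1
  have h := countA hS γ' 0 (by omega) t ht
  rwa [Finset.filter_true_of_mem (by intro s _ j hj; exact absurd hj (Nat.not_lt_zero _))] at h


lemma sum_digits_lt {p : ℕ} (hp : 0 < p) (m : ℕ) (d : ℕ → ℕ) (hd : ∀ i, i < m → d i < p) :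
    ∑ i ∈ Finset.range m, d i * p ^ i < p ^ m := by
  induction m with
  | zero => simp
  | succ m ih =>
    rw [Finset.sum_range_succ, pow_succ]
    have h1 : ∑ i ∈ Finset.range m, d i * p ^ i < p ^ m := ih (fun i hi => hd i (by omega))
    have h3 : d m * p ^ m + p ^ m ≤ p ^ m * p := by
      calc d m * p ^ m + p ^ m = (d m + 1) * p ^ m := by ring
        _ ≤ p * p ^ m := Nat.mul_le_mul_right _ (hd m (by omega))
        _ = p ^ m * p := by ring
    omega

lemma sum_digits_inj {p : ℕ} (hp : 0 < p) :
    ∀ (m : ℕ) (d e : ℕ → ℕ), (∀ i, i < m → d i < p) → (∀ i, i < m → e i < p) →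
    (∑ i ∈ Finset.range m, d i * p ^ i) = (∑ i ∈ Finset.range m, e i * p ^ i) →
    ∀ i, i < m → d i = e i := by
  intro m
  induction m with
  | zero => intro _ _ _ _ _ i hi; omega
  | succ m ih =>
    intro d e hd he hsum i hi
    rw [Finset.sum_range_succ', Finset.sum_range_succ'] at hsum
    have Hd : ∑ k ∈ Finset.range m, d (k+1) * p ^ (k+1) = p * ∑ k ∈ Finset.range m, d (k+1) * p ^ k := by
      rw [Finset.mul_sum]; exact Finset.sum_congr rfl fun k _ => by ring
    have He : ∑ k ∈ Finset.range m, e (k+1) * p ^ (k+1) = p * ∑ k ∈ Finset.range m, e (k+1) * p ^ k := by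
      rw [Finset.mul_sum]; exact Finset.sum_congr rfl fun k _ => by ring
    rw [Hd, He, pow_zero, mul_one, mul_one] at hsum
    have h0 : d 0 = e 0 := by
      have h1 := congrArg (· % p) hsum
      simpa [Nat.mul_add_mod, Nat.mod_eq_of_lt (hd 0 (by omega)),
        Nat.mod_eq_of_lt (he 0 (by omega))] using h1
    have hAB : (∑ k ∈ Finset.range m, d (k+1) * p ^ k) = ∑ k ∈ Finset.range m, e (k+1) * p ^ k := by
      apply Nat.eq_of_mul_eq_mul_left hp
      omega
    rcases i with _ | i
    · exact h0
    · exact ih (fun k => d (k+1)) (fun k => e (k+1)) (fun k hk => hd (k+1) (by omega))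
        (fun k hk => he (k+1) (by omega)) hAB i (by omega)

lemma sum_digits_mod {p : ℕ} {γ m : ℕ} (hγm : γ ≤ m) (d : ℕ → ℕ) :
    (∑ i ∈ Finset.range m, d i * p ^ i) % p ^ γ
      = (∑ i ∈ Finset.range γ, d i * p ^ i) % p ^ γ := by
  have hsplit : ∑ i ∈ Finset.range m, d i * p ^ i
      = ∑ i ∈ Finset.range γ, d i * p ^ i + ∑ i ∈ Finset.Ico γ m, d i * p ^ i := by
    rw [Finset.range_eq_Ico, Finset.range_eq_Ico]
    exact (Finset.sum_Ico_consecutive (fun i => d i * p ^ i) (Nat.zero_le γ) hγm).symm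
  have hdvd : p ^ γ ∣ ∑ i ∈ Finset.Ico γ m, d i * p ^ i :=
    Finset.dvd_sum fun i hi => Dvd.dvd.mul_left (pow_dvd_pow p (Finset.mem_Ico.mp hi).1) _
  obtain ⟨x, hx⟩ := hdvd
  rw [hsplit, hx, Nat.add_mul_mod_self_left]

lemma digitValZ_cast {p : ℕ} [Fact p.Prime] (γ : ℕ) (t : Fin γ → Fin p) :
    digitValZ p γ t
      = ((∑ i ∈ Finset.range γ, (if h : i < γ then ((t ⟨i, h⟩ : ℕ)) else 0) * p ^ i : ℕ) : ℤ_[p]) := by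
  rw [digitValZ]
  push_cast
  rw [← Fin.sum_univ_eq_sum_range (fun i => ((if h : i < γ then ((t ⟨i, h⟩ : ℕ)) else 0 : ℕ) : ℤ_[p]) * (p : ℤ_[p]) ^ i) γ]
  exact Finset.sum_congr rfl fun i _ => by simp [i.isLt]

lemma digit_norm_iff {p : ℕ} [Fact p.Prime] {γ γ' : ℕ} (h : γ ≤ γ')
    (s : Fin γ' → Fin p) (t : Fin γ → Fin p) :
    ‖digitValZ p γ' s - digitValZ p γ t‖ ≤ (p : ℝ) ^ (-(γ:ℤ))
      ↔ (fun i : Fin γ => s (Fin.castLE h i)) = t := by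
  have hp : 0 < p := (Fact.out : p.Prime).pos
  set d : ℕ → ℕ := fun i => if h' : i < γ' then ((s ⟨i, h'⟩ : ℕ)) else 0 with hd_def
  set e : ℕ → ℕ := fun i => if h' : i < γ then ((t ⟨i, h'⟩ : ℕ)) else 0 with he_def
  set A : ℕ := ∑ i ∈ Finset.range γ', d i * p ^ i with hA
  set B : ℕ := ∑ i ∈ Finset.range γ, e i * p ^ i with hB
  have hdlt : ∀ i, i < γ' → d i < p := by
    intro i hi; simp only [hd_def, dif_pos hi]; exact (s ⟨i, hi⟩).isLt
  have helt : ∀ i, i < γ → e i < p := by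
    intro i hi; simp only [he_def, dif_pos hi]; exact (t ⟨i, hi⟩).isLt
  have hcast : digitValZ p γ' s - digitValZ p γ t = (((A : ℤ) - (B : ℤ) : ℤ) : ℤ_[p]) := by
    rw [digitValZ_cast γ' s, digitValZ_cast γ t, ← hA, ← hB]
    push_cast
    ring
  rw [hcast, PadicInt.norm_int_le_pow_iff_dvd]
  have hmodiff : ((p : ℤ) ^ γ ∣ (A : ℤ) - (B : ℤ)) ↔ B ≡ A [MOD p ^ γ] := by
    rw [Nat.modEq_iff_dvd]
    push_cast
    rfl
  rw [hmodiff]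
  unfold Nat.ModEq
  rw [sum_digits_mod h d]
  have hBlt : B < p ^ γ := sum_digits_lt hp γ e helt
  have hGlt : (∑ i ∈ Finset.range γ, d i * p ^ i) < p ^ γ :=
    sum_digits_lt hp γ d (fun i hi => hdlt i (by omega))
  rw [Nat.mod_eq_of_lt hBlt, Nat.mod_eq_of_lt hGlt]
  constructor
  · intro hsum
    funext i
    have := sum_digits_inj hp γ e d helt (fun j hj => hdlt j (by omega)) hsum i i.isLt
    simp only [hd_def, he_def, dif_pos i.isLt, dif_pos (show (i:ℕ) < γ' by omega)] at this
    have hval : (t i : ℕ) = (s (Fin.castLE h i) : ℕ) := by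
      convert this using 2 <;> exact rfl
    exact Fin.val_injective hval.symm
  · intro hfun
    apply Finset.sum_congr rfl
    intro i hi
    have hiγ : i < γ := Finset.mem_range.mp hi
    have hiγ' : i < γ' := by omega
    have := congrFun hfun ⟨i, hiγ⟩
    simp only [he_def, hd_def, dif_pos hiγ, dif_pos hiγ']
    congr 1
    exact congrArg Fin.val this.symm


lemma res_eq_iff {p γ γ' : ℕ} (h : γ ≤ γ') (s s0 : Fin γ' → Fin p) :
    (fun i : Fin γ => s (Fin.castLE h i)) = (fun i : Fin γ => s0 (Fin.castLE h i))
      ↔ ∀ j : Fin γ', (j:ℕ) < γ → s j = s0 j := by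
  rw [funext_iff]
  constructor
  · intro H j hj
    have h1 := H ⟨(j:ℕ), hj⟩
    have h2 : Fin.castLE h ⟨(j:ℕ), hj⟩ = j := Fin.ext rfl
    rwa [h2] at h1
  · intro H i
    exact H _ (by simpa using i.isLt)

lemma nestedLE {p : ℕ} (S : (γ : ℕ) → Finset (Fin γ → Fin p))
    (hnested : ∀ γ : ℕ, ∀ t ∈ S (γ + 1), (fun i : Fin γ => t i.castSucc) ∈ S γ)
    (γ γ' : ℕ) (h : γ ≤ γ') : ∀ s ∈ S γ', (fun i : Fin γ => s (Fin.castLE h i)) ∈ S γ := by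
  induction γ', h using Nat.le_induction with
  | base => intro s hs; exact hs
  | succ n hn ih =>
    intro s hs
    have h1 := hnested n s hs
    have h2 := ih (fun i : Fin n => s i.castSucc) h1
    exact h2

lemma fiber_card {p γ γ' : ℕ} {I : Set ℕ} {S' : Finset (Fin γ' → Fin p)}
    (hS' : IsTIJForm p γ' I S') (h : γ ≤ γ') (s0 : Fin γ' → Fin p) (hs0 : s0 ∈ S') :
    (S'.filter fun s => (fun i : Fin γ => s (Fin.castLE h i))
        = (fun i : Fin γ => s0 (Fin.castLE h i))).card
      = p ^ (I ∩ Set.Ico γ γ').ncard := by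
  have hc := countA hS' (γ' - γ) γ (by omega) s0 hs0
  have hfil : (S'.filter fun s => (fun i : Fin γ => s (Fin.castLE h i))
        = (fun i : Fin γ => s0 (Fin.castLE h i)))
      = S'.filter fun s => ∀ j : Fin γ', (j:ℕ) < γ → s j = s0 j := by
    ext s
    simp only [Finset.mem_filter]
    rw [res_eq_iff h]
  rw [hfil, hc]

lemma surjLE {p : ℕ} (hp : 0 < p) {I : Set ℕ} (S : (γ : ℕ) → Finset (Fin γ → Fin p))
    (hform : ∀ γ : ℕ, IsTIJForm p γ I (S γ))
    (hnested : ∀ γ : ℕ, ∀ t ∈ S (γ + 1), (fun i : Fin γ => t i.castSucc) ∈ S γ)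
    {γ γ' : ℕ} (h : γ ≤ γ') :
    ∀ t ∈ S γ, ∃ s ∈ S γ', (fun i : Fin γ => s (Fin.castLE h i)) = t := by
  classical
  intro t ht
  have himg : (S γ').image (fun s => fun i : Fin γ => s (Fin.castLE h i)) ⊆ S γ := by
    intro b hb
    obtain ⟨s, hs, rfl⟩ := Finset.mem_image.mp hb
    exact nestedLE S hnested γ γ' h s hs
  have hcard' : (S γ').card = ∑ b ∈ (S γ').image (fun s => fun i : Fin γ => s (Fin.castLE h i)),
      ((S γ').filter fun s => (fun i : Fin γ => s (Fin.castLE h i)) = b).card :=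
    Finset.card_eq_sum_card_image _ (S γ')
  have hfibc : ∀ b ∈ (S γ').image (fun s => fun i : Fin γ => s (Fin.castLE h i)),
      ((S γ').filter fun s => (fun i : Fin γ => s (Fin.castLE h i)) = b).card
        = p ^ (I ∩ Set.Ico γ γ').ncard := by
    intro b hb
    obtain ⟨s0, hs0, rfl⟩ := Finset.mem_image.mp hb
    exact fiber_card (hform γ') h s0 hs0
  have hsum : (S γ').card = ((S γ').image (fun s => fun i : Fin γ => s (Fin.castLE h i))).card
      * p ^ (I ∩ Set.Ico γ γ').ncard := by
    rw [hcard', Finset.sum_congr rfl hfibc, Finset.sum_const, smul_eq_mul]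
  have hC' : (S γ').card = p ^ (I ∩ Set.Ico 0 γ').ncard := cardS (hform γ')
  have hC : (S γ).card = p ^ (I ∩ Set.Ico 0 γ).ncard := cardS (hform γ)
  have hadd : (I ∩ Set.Ico 0 γ').ncard
      = (I ∩ Set.Ico 0 γ).ncard + (I ∩ Set.Ico γ γ').ncard := e_add (Nat.zero_le γ) h
  have hppos : 0 < p ^ (I ∩ Set.Ico γ γ').ncard := pow_pos hp _
  have himgcard : ((S γ').image (fun s => fun i : Fin γ => s (Fin.castLE h i))).card
      = (S γ).card := by
    apply Nat.eq_of_mul_eq_mul_right hppos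
    rw [← hsum, hC', hC, hadd, pow_add]
  have heq : (S γ').image (fun s => fun i : Fin γ => s (Fin.castLE h i)) = S γ :=
    Finset.eq_of_subset_of_card_le himg (by rw [himgcard])
  have : t ∈ (S γ').image (fun s => fun i : Fin γ => s (Fin.castLE h i)) := heq ▸ ht
  obtain ⟨s, hs, hres⟩ := Finset.mem_image.mp this
  exact ⟨s, hs, hres⟩

lemma norm_sub_le_max {p : ℕ} [Fact p.Prime] (a b : ℤ_[p]) : ‖a - b‖ ≤ max ‖a‖ ‖b‖ := by
  have h := PadicInt.nonarchimedean a (-b)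
  simpa [sub_eq_add_neg] using h


end Stmt18Aux

open Stmt18Aux

/-- Let `ν` be a probability measure on `ℤ_p` that is the weak limit of the
uniform measures on nested `p`-homogeneous sets `C_γ` of `𝒯_{I_γ,J_γ}`-form
(`I_γ = I ∩ {0,…,γ-1}`, `I ⊂ ℕ` infinite). Then for every `x` in the support of
`ν` and every `γ ≥ 0`, `ν(B(x, p^{-γ})) = p^{-#I_γ}`. -/
theorem stmt18 (p : ℕ) [Fact p.Prime] [MeasurableSpace ℤ_[p]] [BorelSpace ℤ_[p]]
    (I : Set ℕ) (hI : I.Infinite)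
    (S : (γ : ℕ) → Finset (Fin γ → Fin p))
    (hform : ∀ γ : ℕ, IsTIJForm p γ I (S γ))
    (hnested : ∀ γ : ℕ, ∀ t ∈ S (γ + 1), (fun i : Fin γ => t i.castSucc) ∈ S γ)
    (ν : Measure ℤ_[p]) [IsProbabilityMeasure ν]
    (hweak : ∀ f : BoundedContinuousFunction ℤ_[p] ℝ,
      Tendsto (fun γ : ℕ => (∑ t ∈ S γ, f (digitValZ p γ t)) / ((S γ).card : ℝ))
        atTop (nhds (∫ x, f x ∂ν))) :
    ∀ x : ℤ_[p], (∀ γ : ℕ, ν {y : ℤ_[p] | ‖y - x‖ ≤ (p : ℝ) ^ (-(γ : ℤ))} ≠ 0) →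
      ∀ γ : ℕ, ν {y : ℤ_[p] | ‖y - x‖ ≤ (p : ℝ) ^ (-(γ : ℤ))}
        = ((p : ENNReal) ^ (Nat.card ↥(I ∩ Set.Iio γ)))⁻¹ := by
  classical
  intro x hx γ
  have hp : 0 < p := (Fact.out : p.Prime).pos
  set n : ℕ := (I ∩ Set.Ico 0 γ).ncard with hn
  have hncard : Nat.card ↥(I ∩ Set.Iio γ) = n := by
    rw [Nat.card_coe_set_eq, hn]
    congr 1
    ext z
    simp [Set.mem_Ico, Set.mem_Iio]
  set B : Set ℤ_[p] := {y : ℤ_[p] | ‖y - x‖ ≤ (p : ℝ) ^ (-(γ : ℤ))} with hB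
  have hBopen : IsOpen B := by
    have hBeq : B = Metric.ball x ((p:ℝ) ^ (-(γ:ℤ) + 1)) := by
      ext y
      simp only [hB, Set.mem_setOf_eq, Metric.mem_ball, dist_eq_norm]
      exact PadicInt.norm_le_pow_iff_norm_lt_pow_add_one (y - x) (-(γ:ℤ))
    rw [hBeq]; exact Metric.isOpen_ball
  have hBclosed : IsClosed B := by
    have hBeq : B = Metric.closedBall x ((p:ℝ) ^ (-(γ:ℤ))) := by
      ext y; simp [hB, Metric.mem_closedBall, dist_eq_norm]
    rw [hBeq]; exact Metric.isClosed_closedBall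
  have hBmeas : MeasurableSet B := hBclosed.measurableSet
  have hcont : Continuous (B.indicator (1 : ℤ_[p] → ℝ)) := by
    apply IsLocallyConstant.continuous
    intro s
    have hpre : B.indicator (1 : ℤ_[p] → ℝ) ⁻¹' s
        = (B ∩ (if (1:ℝ) ∈ s then Set.univ else ∅))
          ∪ (Bᶜ ∩ (if (0:ℝ) ∈ s then Set.univ else ∅)) := by
      ext y
      by_cases hy : y ∈ B <;> simp [Set.indicator_apply, hy] <;> split_ifs <;> simp [*]
    rw [hpre]
    apply IsOpen.union
    · exact hBopen.inter (by split_ifs <;> simp [isOpen_univ, isOpen_empty])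
    · exact hBclosed.isOpen_compl.inter (by split_ifs <;> simp [isOpen_univ, isOpen_empty])
  set f : BoundedContinuousFunction ℤ_[p] ℝ :=
    BoundedContinuousFunction.ofNormedAddCommGroup (B.indicator (1 : ℤ_[p] → ℝ)) hcont 1
      (by
        intro y
        rw [Set.indicator_apply]
        split_ifs <;> simp) with hf
  have hfapp : ∀ y : ℤ_[p], f y = if y ∈ B then (1:ℝ) else 0 := by
    intro y
    rw [hf, BoundedContinuousFunction.coe_ofNormedAddCommGroup, Set.indicator_apply]
    split_ifs <;> simp
  have hint : ∫ y, f y ∂ν = (ν B).toReal := by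
    have hcoe : ⇑f = B.indicator (1 : ℤ_[p] → ℝ) := by
      rw [hf, BoundedContinuousFunction.coe_ofNormedAddCommGroup]
    rw [hcoe]
    exact integral_indicator_one hBmeas
  have hsum : ∀ γ' : ℕ, (∑ t ∈ S γ', f (digitValZ p γ' t))
      = (((S γ').filter fun t => digitValZ p γ' t ∈ B).card : ℝ) := by
    intro γ'
    rw [Finset.sum_congr rfl (fun t _ => hfapp (digitValZ p γ' t)), Finset.sum_boole]
  by_cases hex : ∃ t0 ∈ S γ, ‖digitValZ p γ t0 - x‖ ≤ (p:ℝ) ^ (-(γ:ℤ))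
  · obtain ⟨t0, ht0, hclose⟩ := hex
    have key : ∀ γ' : ℕ, γ ≤ γ' →
        ((S γ').filter fun s => digitValZ p γ' s ∈ B).card
          = p ^ (I ∩ Set.Ico γ γ').ncard := by
      intro γ' h'
      obtain ⟨s0, hs0, hres0⟩ := surjLE hp S hform hnested h' t0 ht0
      have hmem : ∀ s : Fin γ' → Fin p, digitValZ p γ' s ∈ B
          ↔ (fun i : Fin γ => s (Fin.castLE h' i)) = t0 := by
        intro s
        constructor
        · intro hmemB
          have hmemB' : ‖digitValZ p γ' s - x‖ ≤ (p:ℝ) ^ (-(γ:ℤ)) := hmemB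
          have h1 : ‖digitValZ p γ' s - digitValZ p γ t0‖ ≤ (p:ℝ) ^ (-(γ:ℤ)) := by
            have h3 : digitValZ p γ' s - digitValZ p γ t0
                = (digitValZ p γ' s - x) - (digitValZ p γ t0 - x) := by ring
            rw [h3]
            exact le_trans (norm_sub_le_max _ _) (max_le hmemB' hclose)
          exact (digit_norm_iff h' s t0).mp h1
        · intro hres
          have h1 : ‖digitValZ p γ' s - digitValZ p γ t0‖ ≤ (p:ℝ) ^ (-(γ:ℤ)) :=
            (digit_norm_iff h' s t0).mpr hres
          show ‖digitValZ p γ' s - x‖ ≤ (p:ℝ) ^ (-(γ:ℤ))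
          have h3 : digitValZ p γ' s - x
              = (digitValZ p γ' s - digitValZ p γ t0) + (digitValZ p γ t0 - x) := by ring
          rw [h3]
          exact le_trans (PadicInt.nonarchimedean _ _) (max_le h1 hclose)
      have hfil : ((S γ').filter fun s => digitValZ p γ' s ∈ B)
          = ((S γ').filter fun s => (fun i : Fin γ => s (Fin.castLE h' i))
              = (fun i : Fin γ => s0 (Fin.castLE h' i))) := by
        ext s
        simp only [Finset.mem_filter]
        rw [hmem s, hres0]
      rw [hfil]
      exact fiber_card (hform γ') h' s0 hs0
    have hconst : ∀ γ' : ℕ, γ ≤ γ' →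
        (∑ t ∈ S γ', f (digitValZ p γ' t)) / ((S γ').card : ℝ) = ((p:ℝ) ^ n)⁻¹ := by
      intro γ' h'
      have hpa : ((p:ℝ) ^ (I ∩ Set.Ico γ γ').ncard) ≠ 0 := by positivity
      rw [hsum γ', key γ' h', cardS (hform γ'), e_add (Nat.zero_le γ) h', ← hn, pow_add]
      push_cast
      rw [mul_comm, ← div_div, div_self hpa, one_div]
    have hTend : Tendsto (fun γ' : ℕ => (∑ t ∈ S γ', f (digitValZ p γ' t)) / ((S γ').card : ℝ))
        atTop (nhds (((p:ℝ) ^ n)⁻¹)) := by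
      apply Tendsto.congr' _ tendsto_const_nhds
      filter_upwards [eventually_ge_atTop γ] with γ' h'
      exact (hconst γ' h').symm
    have hlim := tendsto_nhds_unique (hweak f) hTend
    rw [hint] at hlim
    rw [hncard]
    have hne1 : ν B ≠ ⊤ := measure_ne_top ν B
    have hne2 : ((p : ENNReal) ^ n)⁻¹ ≠ ⊤ := by
      rw [ENNReal.inv_ne_top]
      exact pow_ne_zero _ (by exact_mod_cast hp.ne')
    rw [← ENNReal.toReal_eq_toReal_iff' hne1 hne2, hlim, ENNReal.toReal_inv]
    congr 1
  · exfalso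
    have key0 : ∀ γ' : ℕ, γ ≤ γ' →
        ((S γ').filter fun s => digitValZ p γ' s ∈ B).card = 0 := by
      intro γ' h'
      rw [Finset.card_eq_zero, Finset.filter_eq_empty_iff]
      intro s hs hmemB
      have hmemB' : ‖digitValZ p γ' s - x‖ ≤ (p:ℝ) ^ (-(γ:ℤ)) := hmemB
      apply hex
      refine ⟨(fun i : Fin γ => s (Fin.castLE h' i)), nestedLE S hnested γ γ' h' s hs, ?_⟩
      have h1 : ‖digitValZ p γ' s - digitValZ p γ (fun i : Fin γ => s (Fin.castLE h' i))‖
          ≤ (p:ℝ) ^ (-(γ:ℤ)) := (digit_norm_iff h' s _).mpr rfl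
      have h3 : digitValZ p γ (fun i : Fin γ => s (Fin.castLE h' i)) - x
          = (digitValZ p γ' s - x) - (digitValZ p γ' s
              - digitValZ p γ (fun i : Fin γ => s (Fin.castLE h' i))) := by ring
      rw [h3]
      exact le_trans (norm_sub_le_max _ _) (max_le hmemB' h1)
    have hTend : Tendsto (fun γ' : ℕ => (∑ t ∈ S γ', f (digitValZ p γ' t)) / ((S γ').card : ℝ))
        atTop (nhds 0) := by
      apply Tendsto.congr' _ tendsto_const_nhds
      filter_upwards [eventually_ge_atTop γ] with γ' h'
      rw [hsum γ', key0 γ' h']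
      simp
    have hlim := tendsto_nhds_unique (hweak f) hTend
    rw [hint] at hlim
    have hzero : ν B = 0 := by
      have hne1 : ν B ≠ ⊤ := measure_ne_top ν B
      exact (ENNReal.toReal_eq_zero_iff _).mp hlim |>.resolve_right hne1
    exact hx γ hzero
end

section
/- Let p be a prime, I ⊂ ℕ an infinite set, and ν the singular measure on ℤ_p constructed as the weak limit of uniform measures on nested p-homogeneous sets C_γ of 𝒯_{I_γ,J_γ}-form (I_γ = I ∩ {0,…,γ−1}). Then the lower local dimension of ν at every point x of its support equals liminf_{γ→∞} #I_γ / γ, and consequently the lower Hausdorff dimension of ν equals liminf_{γ→∞} #(I ∩ {0,…,γ−1})/γ. -/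
open scoped BigOperators
open MeasureTheory Filter

/-- The lower local dimension of `ν` at `x`:
`liminf_{r→0⁺} log ν(B(x,r)) / log r`. -/
noncomputable def lowerLocalDim (p : ℕ) [Fact p.Prime] [MeasurableSpace ℤ_[p]]
    (ν : Measure ℤ_[p]) (x : ℤ_[p]) : ℝ :=
  Filter.liminf
    (fun r : ℝ => Real.log (ν {y : ℤ_[p] | ‖y - x‖ ≤ r}).toReal / Real.log r)
    (nhdsWithin 0 (Set.Ioi 0))

open Set
open scoped ENNReal NNReal

namespace Stmt19Aux
variable {p : ℕ} [hp : Fact p.Prime]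

variable {p : ℕ} [hp : Fact p.Prime]

/-- the closed ball of radius `p^{-γ}` around `x`. -/
def pB (p : ℕ) [Fact p.Prime] (x : ℤ_[p]) (γ : ℕ) : Set ℤ_[p] :=
  {y : ℤ_[p] | ‖y - x‖ ≤ (p : ℝ) ^ (-(γ : ℤ))}

lemma pB_eq_closedBall (x : ℤ_[p]) (γ : ℕ) :
    pB p x γ = Metric.closedBall x ((p : ℝ) ^ (-(γ : ℤ))) := by
  ext y; simp [pB, Metric.mem_closedBall, dist_eq_norm]

lemma mem_pB_self (x : ℤ_[p]) (γ : ℕ) : x ∈ pB p x γ := by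
  simp [pB]

lemma pB_swap {x x' : ℤ_[p]} {γ : ℕ} (h : ‖x' - x‖ ≤ (p : ℝ) ^ (-(γ : ℤ))) :
    pB p x γ = pB p x' γ := by
  have key : ∀ z w : ℤ_[p], ‖w - z‖ ≤ (p : ℝ) ^ (-(γ : ℤ)) →
      ∀ y, y ∈ pB p z γ → y ∈ pB p w γ := by
    intro z w hzw y hy
    have : y - w = (y - z) + (z - w) := by ring
    simp only [pB, Set.mem_setOf_eq] at hy ⊢
    rw [this]
    refine (PadicInt.nonarchimedean _ _).trans (max_le hy ?_)
    rwa [← norm_neg, neg_sub]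
  ext y
  constructor
  · exact key x x' h y
  · refine key x' x ?_ y
    rwa [← norm_neg, neg_sub]

lemma norm_appr_sub (x : ℤ_[p]) (γ : ℕ) :
    ‖x - ((x.appr γ : ℤ_[p]))‖ ≤ (p : ℝ) ^ (-(γ : ℤ)) := by
  rw [PadicInt.norm_le_pow_iff_mem_span_pow]
  exact PadicInt.appr_spec γ x

lemma pB_appr (x : ℤ_[p]) (γ : ℕ) :
    pB p x γ = pB p ((x.appr γ : ℤ_[p])) γ :=
  pB_swap (by rw [← norm_neg, neg_sub]; exact norm_appr_sub x γ)

lemma mem_pB_appr (x : ℤ_[p]) (γ : ℕ) : x ∈ pB p ((x.appr γ : ℤ_[p])) γ :=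
  (pB_appr x γ) ▸ mem_pB_self x γ

lemma pB_disjoint {m m' γ : ℕ} (hm : m < p ^ γ) (hm' : m' < p ^ γ) (hne : m ≠ m') :
    pB p (m : ℤ_[p]) γ ∩ pB p (m' : ℤ_[p]) γ = ∅ := by
  by_contra h
  obtain ⟨y, hy1, hy2⟩ := Set.nonempty_iff_ne_empty.2 h
  simp only [pB, Set.mem_setOf_eq] at hy1 hy2
  have hnorm : ‖((m : ℤ_[p])) - (m' : ℤ_[p])‖ ≤ (p : ℝ) ^ (-(γ : ℤ)) := by
    have heq : (m : ℤ_[p]) - (m' : ℤ_[p]) = (y - (m' : ℤ_[p])) + -(y - (m : ℤ_[p])) := by ring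
    rw [heq]
    refine (PadicInt.nonarchimedean _ _).trans (max_le hy2 ?_)
    rw [norm_neg]; exact hy1
  have hcast : ((m : ℤ_[p])) - (m' : ℤ_[p]) = (((m : ℤ) - (m' : ℤ) : ℤ) : ℤ_[p]) := by
    push_cast; ring
  rw [hcast, PadicInt.norm_int_le_pow_iff_dvd] at hnorm
  have hmz : (m : ℤ) < (p : ℤ) ^ γ := by exact_mod_cast hm
  have hmz' : (m' : ℤ) < (p : ℤ) ^ γ := by exact_mod_cast hm'
  have habs : |((m : ℤ) - m')| < (p : ℤ) ^ γ := by
    rw [abs_sub_lt_iff]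
    constructor <;> omega
  have h0 := Int.eq_zero_of_abs_lt_dvd hnorm habs
  have : (m : ℤ) = m' := by omega
  exact hne (by exact_mod_cast this)



lemma diam_pB (x : ℤ_[p]) (γ : ℕ) :
    EMetric.diam (pB p x γ) ≤ ENNReal.ofReal ((p : ℝ) ^ (-(γ : ℤ))) := by
  refine EMetric.diam_le fun y hy z hz => ?_
  simp only [pB, Set.mem_setOf_eq] at hy hz
  rw [edist_dist]
  refine ENNReal.ofReal_le_ofReal ?_
  have heq : y - z = (y - x) + -(z - x) := by ring
  rw [dist_eq_norm, heq]
  exact (PadicInt.nonarchimedean _ _).trans (max_le hy (by rw [norm_neg]; exact hz))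

lemma ennreal_zpow_eq (k : ℤ) : (p : ℝ≥0∞) ^ k = ENNReal.ofReal ((p : ℝ) ^ k) := by
  have hp0 : (p : ℝ≥0) ≠ 0 := by
    simp [hp.out.ne_zero]
  have h1 : (p : ℝ≥0∞) = ((p : ℝ≥0) : ℝ≥0∞) := by norm_cast
  rw [h1, ← ENNReal.coe_zpow hp0]
  rw [show ((p : ℝ) ^ k) = (((p : ℝ≥0) ^ k : ℝ≥0) : ℝ) by push_cast; ring]
  rw [ENNReal.ofReal_coe_nnreal]

lemma ennreal_rpow_eq (k : ℤ) : (p : ℝ≥0∞) ^ ((k : ℤ) : ℝ) = ENNReal.ofReal ((p : ℝ) ^ k) := by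
  rw [ENNReal.rpow_intCast, ennreal_zpow_eq]

lemma ncard_le (I : Set ℕ) (γ : ℕ) : Nat.card ↥(I ∩ Set.Iio γ) ≤ γ := by
  rw [Nat.card_coe_set_eq]
  calc (I ∩ Set.Iio γ).ncard ≤ (Set.Iio γ).ncard :=
        Set.ncard_le_ncard Set.inter_subset_right (Set.finite_Iio γ)
    _ = γ := by
        rw [show Set.Iio γ = ↑(Finset.Iio γ) by simp, Set.ncard_coe_finset, Nat.card_Iio]

lemma ncard_tendsto (I : Set ℕ) (hI : I.Infinite) :
    Tendsto (fun γ => Nat.card ↥(I ∩ Set.Iio γ)) atTop atTop := by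
  rw [tendsto_atTop_atTop]
  intro N
  obtain ⟨t, htI, htcard⟩ := hI.exists_subset_card_eq N
  refine ⟨(t.sup id) + 1, fun γ hγ => ?_⟩
  have hsub : ↑t ⊆ I ∩ Set.Iio γ := by
    intro a ha
    refine ⟨htI ha, ?_⟩
    have : a ≤ t.sup id := Finset.le_sup (f := id) ha
    simp only [Set.mem_Iio]; omega
  calc N = t.card := htcard.symm
    _ = (↑t : Set ℕ).ncard := (Set.ncard_coe_finset t).symm
    _ ≤ (I ∩ Set.Iio γ).ncard := Set.ncard_le_ncard hsub (Set.toFinite _)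
    _ = Nat.card ↥(I ∩ Set.Iio γ) := (Nat.card_coe_set_eq _).symm


lemma measurableSet_pB [MeasurableSpace ℤ_[p]] [BorelSpace ℤ_[p]] (x : ℤ_[p]) (γ : ℕ) :
    MeasurableSet (pB p x γ) := by
  rw [pB_eq_closedBall]; exact measurableSet_closedBall

lemma null_compl [MeasurableSpace ℤ_[p]] [BorelSpace ℤ_[p]] (ν : Measure ℤ_[p]) :
    ν {x : ℤ_[p] | ∀ γ, ν (pB p x γ) ≠ 0}ᶜ = 0 := by
  set N : ℕ × ℕ → Set ℤ_[p] :=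
    fun q => ⋃ (_ : ν (pB p (q.2 : ℤ_[p]) q.1) = 0), pB p (q.2 : ℤ_[p]) q.1 with hN
  have hsub : {x : ℤ_[p] | ∀ γ, ν (pB p x γ) ≠ 0}ᶜ ⊆ ⋃ q : ℕ × ℕ, N q := by
    intro x hx
    simp only [Set.mem_compl_iff, Set.mem_setOf_eq, not_forall, not_not] at hx
    obtain ⟨γ, hγ⟩ := hx
    refine Set.mem_iUnion.2 ⟨(γ, x.appr γ), ?_⟩
    have hballs : pB p (((x.appr γ : ℕ) : ℤ_[p])) γ = pB p x γ := (pB_appr x γ).symm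
    simp only [hN]
    rw [hballs]
    exact Set.mem_iUnion.2 ⟨hγ, mem_pB_self x γ⟩
  refine measure_mono_null hsub (measure_iUnion_null fun q => ?_)
  by_cases h : ν (pB p (q.2 : ℤ_[p]) q.1) = 0
  · simpa [hN, h] using h
  · simp [hN, h]

lemma key_fact [MeasurableSpace ℤ_[p]] [BorelSpace ℤ_[p]] (I : Set ℕ) (ν : Measure ℤ_[p])
    (hball : ∀ x : ℤ_[p], (∀ γ : ℕ, ν {y : ℤ_[p] | ‖y - x‖ ≤ (p : ℝ) ^ (-(γ : ℤ))} ≠ 0) →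
      ∀ γ : ℕ, ν {y : ℤ_[p] | ‖y - x‖ ≤ (p : ℝ) ^ (-(γ : ℤ))}
        = ((p : ENNReal) ^ (Nat.card ↥(I ∩ Set.Iio γ)))⁻¹) :
    ∀ x γ, ν (pB p x γ) ≠ 0 →
      ν (pB p x γ) = ((p : ENNReal) ^ (Nat.card ↥(I ∩ Set.Iio γ)))⁻¹ := by
  intro x γ hx
  have h1 : (pB p x γ ∩ {x | ∀ γ, ν (pB p x γ) ≠ 0}).Nonempty := by
    by_contra h
    rw [Set.not_nonempty_iff_eq_empty, ← Set.disjoint_iff_inter_eq_empty] at h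
    exact hx (measure_mono_null h.subset_compl_right (null_compl ν))
  obtain ⟨y, hyB, hyG⟩ := h1
  rw [pB_swap hyB]
  exact hball y hyG γ


lemma part1 [MeasurableSpace ℤ_[p]] [BorelSpace ℤ_[p]] (I : Set ℕ)
    (ν : Measure ℤ_[p]) [IsProbabilityMeasure ν]
    (x : ℤ_[p])
    (hx : ∀ γ : ℕ, ν (pB p x γ) = ((p : ENNReal) ^ (Nat.card ↥(I ∩ Set.Iio γ)))⁻¹) :
    Filter.liminf
        (fun r : ℝ => Real.log (ν {y : ℤ_[p] | ‖y - x‖ ≤ r}).toReal / Real.log r)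
        (nhdsWithin 0 (Set.Ioi 0))
      = Filter.liminf (fun γ : ℕ => (Nat.card ↥(I ∩ Set.Iio γ) : ℝ) / γ) atTop := by
  have hp1 : (1:ℝ) < p := by exact_mod_cast hp.out.one_lt
  have hp0 : (0:ℝ) < p := by linarith
  have hlogp : 0 < Real.log p := Real.log_pos hp1
  set n : ℕ → ℕ := fun γ => Nat.card ↥(I ∩ Set.Iio γ) with hn
  set f : ℝ → ℝ :=
    fun r => Real.log (ν {y : ℤ_[p] | ‖y - x‖ ≤ r}).toReal / Real.log r with hf
  set g : ℕ → ℝ := fun γ => (n γ : ℝ) / γ with hg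
  have hngam : ∀ γ, n γ ≤ γ := ncard_le I
  have hg0 : ∀ γ, 0 ≤ g γ := fun γ => by positivity
  have hg1 : ∀ γ, g γ ≤ 1 := by
    intro γ
    rcases Nat.eq_zero_or_pos γ with h | h
    · simp [hg, h]
    · rw [hg]
      have : (0:ℝ) < γ := by exact_mod_cast h
      rw [div_le_one this]
      exact_mod_cast hngam γ
  -- value of ν on standard balls
  have hνr : ∀ γ : ℕ, (ν (pB p x γ)).toReal = (p:ℝ) ^ (-(n γ : ℤ)) := by
    intro γ
    rw [hx γ, zpow_neg, zpow_natCast, ENNReal.toReal_inv]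
    congr 1
  -- value of f on standard radii
  have hflog : ∀ γ : ℕ, f ((p:ℝ) ^ (-(γ:ℤ)))
      = ((n γ : ℝ) * Real.log p) / ((γ:ℝ) * Real.log p) := by
    intro γ
    have hsetEq : {y : ℤ_[p] | ‖y - x‖ ≤ (p:ℝ) ^ (-(γ:ℤ))} = pB p x γ := rfl
    show Real.log (ν {y : ℤ_[p] | ‖y - x‖ ≤ (p:ℝ) ^ (-(γ:ℤ))}).toReal
        / Real.log ((p:ℝ) ^ (-(γ:ℤ))) = _
    rw [hsetEq, hνr γ, Real.log_zpow, Real.log_zpow]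
    push_cast
    rw [neg_mul, neg_mul, neg_div_neg_eq]
  have hfg : ∀ γ : ℕ, 1 ≤ γ → f ((p:ℝ) ^ (-(γ:ℤ))) = g γ := by
    intro γ hγ
    have hγ0 : (γ:ℝ) ≠ 0 := by positivity
    rw [hflog γ, hg, mul_comm (n γ : ℝ) _, mul_comm (γ:ℝ) _,
      mul_div_mul_left _ _ (ne_of_gt hlogp)]
  -- the standard radii tend to 0 within Ioi 0
  have hu : Tendsto (fun γ : ℕ => (p:ℝ) ^ (-(γ:ℤ))) atTop (nhdsWithin 0 (Set.Ioi 0)) := by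
    apply tendsto_nhdsWithin_of_tendsto_nhds_of_eventually_within
    · have heq : ∀ γ : ℕ, (p:ℝ) ^ (-(γ:ℤ)) = ((p:ℝ)⁻¹) ^ γ := by
        intro γ
        rw [zpow_neg, ← inv_zpow, zpow_natCast]
      simp only [heq]
      exact tendsto_pow_atTop_nhds_zero_of_lt_one (by positivity) (by
        rw [inv_lt_one_iff₀]; right; exact hp1)
    · refine Eventually.of_forall fun γ => ?_
      have : (0:ℝ) < (p:ℝ) ^ (-(γ:ℤ)) := by positivity
      exact this
  -- eventual facts near 0⁺
  have hev01 : ∀ᶠ r in nhdsWithin (0:ℝ) (Set.Ioi 0), r ∈ Set.Ioo (0:ℝ) 1 :=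
    Ioo_mem_nhdsGT zero_lt_one
  have hf0 : ∀ r ∈ Set.Ioo (0:ℝ) 1, 0 ≤ f r := by
    intro r hr
    have hlogr : Real.log r < 0 := Real.log_neg hr.1 hr.2
    have hnum : Real.log (ν {y : ℤ_[p] | ‖y - x‖ ≤ r}).toReal ≤ 0 := by
      apply Real.log_nonpos (ENNReal.toReal_nonneg)
      have := prob_le_one (μ := ν) (s := {y : ℤ_[p] | ‖y - x‖ ≤ r})
      exact ENNReal.toReal_le_of_le_ofReal zero_le_one (by simpa using this)
    rw [hf, div_nonneg_iff]
    exact Or.inr ⟨hnum, hlogr.le⟩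
  have hfbdd : IsBoundedUnder (· ≥ ·) (nhdsWithin (0:ℝ) (Set.Ioi 0)) f :=
    ⟨0, hev01.mono fun r hr => hf0 r hr⟩
  have hgbdd : IsBoundedUnder (· ≥ ·) atTop g :=
    isBoundedUnder_of ⟨0, fun γ => hg0 γ⟩
  have hgcbdd : IsCoboundedUnder (· ≥ ·) atTop g :=
    IsCoboundedUnder.of_frequently_le (a := 1)
      ((Eventually.of_forall hg1).frequently)
  -- `f` composed with standard radii agrees with `g` eventually
  have hcomp : (fun γ : ℕ => f ((p:ℝ) ^ (-(γ:ℤ)))) =ᶠ[atTop] g :=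
    eventually_atTop.2 ⟨1, fun γ hγ => hfg γ hγ⟩
  -- direction ≤
  have h_le : liminf f (nhdsWithin (0:ℝ) (Set.Ioi 0)) ≤ liminf g atTop := by
    have hcb2 : IsCoboundedUnder (· ≥ ·)
        (map (fun γ : ℕ => (p:ℝ) ^ (-(γ:ℤ))) atTop) f := by
      refine IsCoboundedUnder.of_frequently_le (a := 1) ?_
      rw [frequently_map]
      have hev : ∀ᶠ γ : ℕ in atTop, f ((p:ℝ) ^ (-(γ:ℤ))) ≤ 1 := by
        filter_upwards [eventually_ge_atTop 1] with γ hγ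
        rw [hfg γ hγ]; exact hg1 γ
      exact hev.frequently
    calc liminf f (nhdsWithin (0:ℝ) (Set.Ioi 0))
        ≤ liminf f (map (fun γ : ℕ => (p:ℝ) ^ (-(γ:ℤ))) atTop) :=
          liminf_le_liminf_of_le hu hfbdd hcb2
      _ = liminf (fun γ : ℕ => f ((p:ℝ) ^ (-(γ:ℤ)))) atTop := (liminf_comp f _ atTop).symm
      _ = liminf g atTop := liminf_congr hcomp
  -- direction ≥
  have h_ge : liminf g atTop ≤ liminf f (nhdsWithin (0:ℝ) (Set.Ioi 0)) := by
    set Γ : ℝ → ℕ := fun r => ⌈(-Real.log r) / Real.log p⌉₊ with hΓ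
    have hΓtend : Tendsto Γ (nhdsWithin (0:ℝ) (Set.Ioi 0)) atTop := by
      rw [tendsto_atTop]
      intro b
      have htend : Tendsto (fun r : ℝ => (-Real.log r) / Real.log p)
          (nhdsWithin (0:ℝ) (Set.Ioi 0)) atTop := by
        apply Tendsto.atTop_div_const hlogp
        exact tendsto_neg_atBot_atTop.comp Real.tendsto_log_nhdsGT_zero
      filter_upwards [htend.eventually_ge_atTop (b:ℝ)] with r hr
      have : (b:ℝ) ≤ (⌈(-Real.log r) / Real.log p⌉₊ : ℝ) := hr.trans (Nat.le_ceil _)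
      exact_mod_cast this
    have hkey : ∀ r ∈ Set.Ioo (0:ℝ) 1, g (Γ r) ≤ f r := by
      intro r hr
      have hlogr : Real.log r < 0 := Real.log_neg hr.1 hr.2
      set c : ℝ := (-Real.log r) / Real.log p with hc
      have hc0 : 0 < c := div_pos (by linarith) hlogp
      have hγ1 : 0 < Γ r := Nat.ceil_pos.2 hc0
      have hcle : c ≤ (Γ r : ℝ) := Nat.le_ceil c
      have hclt : (Γ r : ℝ) < c + 1 := Nat.ceil_lt_add_one hc0.le
      have hdle : -Real.log r ≤ (Γ r : ℝ) * Real.log p := by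
        have := (div_le_iff₀ hlogp).1 hcle
        linarith
      have h1 : (p:ℝ) ^ (-(Γ r : ℤ)) ≤ r := by
        rw [← Real.log_le_log_iff (by positivity) hr.1, Real.log_zpow]
        push_cast
        linarith
      have h2 : r < (p:ℝ) ^ (-(Γ r : ℤ) + 1) := by
        rw [← Real.log_lt_log_iff hr.1 (by positivity), Real.log_zpow]
        have hcmul : c * Real.log p = -Real.log r := div_mul_cancel₀ _ (ne_of_gt hlogp)
        have h3 : ((Γ r : ℝ) - 1) * Real.log p < -Real.log r := by nlinarith
        push_cast
        nlinarith
      have hsetEq : {y : ℤ_[p] | ‖y - x‖ ≤ r} = pB p x (Γ r) := by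
        ext y
        simp only [Set.mem_setOf_eq, pB]
        constructor
        · intro hy
          rw [PadicInt.norm_le_pow_iff_norm_lt_pow_add_one]
          exact lt_of_le_of_lt hy h2
        · intro hy; exact hy.trans h1
      have hfr : f r = ((n (Γ r) : ℝ) * Real.log p) / (-Real.log r) := by
        show Real.log (ν {y : ℤ_[p] | ‖y - x‖ ≤ r}).toReal / Real.log r = _
        rw [hsetEq, hνr, Real.log_zpow]
        push_cast
        rw [neg_mul, neg_div, ← div_neg]
      rw [hfr]
      have hΓpos : (0:ℝ) < (Γ r : ℝ) := by exact_mod_cast hγ1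
      have hden : 0 < -Real.log r := by linarith
      calc g (Γ r) = ((n (Γ r) : ℝ) * Real.log p) / ((Γ r : ℝ) * Real.log p) := by
            rw [hg, mul_comm ((n (Γ r)):ℝ) _, mul_comm ((Γ r : ℕ):ℝ) _,
              mul_div_mul_left _ _ (ne_of_gt hlogp)]
        _ ≤ ((n (Γ r) : ℝ) * Real.log p) / (-Real.log r) := by
            gcongr
    have hbdd2 : IsBoundedUnder (· ≥ ·) (nhdsWithin (0:ℝ) (Set.Ioi 0)) (fun r => g (Γ r)) :=
      isBoundedUnder_of ⟨0, fun r => hg0 (Γ r)⟩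
    have hcbdd2 : IsCoboundedUnder (· ≥ ·) (nhdsWithin (0:ℝ) (Set.Ioi 0)) f := by
      refine IsCoboundedUnder.of_frequently_le (a := 1) ?_
      refine Tendsto.frequently hu ?_
      have hev : ∀ᶠ γ : ℕ in atTop, f ((p:ℝ) ^ (-(γ:ℤ))) ≤ 1 := by
        filter_upwards [eventually_ge_atTop 1] with γ hγ
        rw [hfg γ hγ]; exact hg1 γ
      exact hev.frequently
    have hcbdd3 : IsCoboundedUnder (· ≥ ·) (map Γ (nhdsWithin (0:ℝ) (Set.Ioi 0))) g := by
      refine IsCoboundedUnder.of_frequently_le (a := 1) ?_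
      rw [frequently_map]
      exact Eventually.frequently (Eventually.of_forall fun r => hg1 (Γ r))
    calc liminf g atTop ≤ liminf (fun r => g (Γ r)) (nhdsWithin (0:ℝ) (Set.Ioi 0)) := by
          have h := liminf_le_liminf_of_le hΓtend hgbdd hcbdd3
          rwa [← liminf_comp] at h
      _ ≤ liminf f (nhdsWithin (0:ℝ) (Set.Ioi 0)) :=
          liminf_le_liminf (hev01.mono fun r hr => hkey r hr) hbdd2 hcbdd2
  exact le_antisymm h_le h_ge


lemma frostman [MeasurableSpace ℤ_[p]] [BorelSpace ℤ_[p]] (I : Set ℕ)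
    (ν : Measure ℤ_[p]) [IsProbabilityMeasure ν]
    (hK : ∀ x γ, ν (pB p x γ) ≠ 0 →
      ν (pB p x γ) = ((p : ℝ≥0∞) ^ (Nat.card ↥(I ∩ Set.Iio γ)))⁻¹)
    (hn_tend : Tendsto (fun γ => Nat.card ↥(I ∩ Set.Iio γ)) atTop atTop)
    (d : ℝ≥0) (hd0 : 0 < d)
    (γ0 : ℕ) (hγ0 : ∀ γ, γ0 ≤ γ → (d : ℝ) * γ ≤ (Nat.card ↥(I ∩ Set.Iio γ) : ℝ)) :
    ν ≤ (MeasureTheory.Measure.hausdorffMeasure (d : ℝ) : Measure ℤ_[p]) := by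
  have hp1 : (1:ℝ≥0∞) < p := by exact_mod_cast hp.out.one_lt
  have hp1' : (1:ℝ≥0∞) ≤ p := hp1.le
  set n : ℕ → ℕ := fun γ => Nat.card ↥(I ∩ Set.Iio γ) with hn
  -- singletons are null
  have hatom : ∀ x : ℤ_[p], ν {x} = 0 := by
    intro x
    have hle : ∀ k : ℕ, ν {x} ≤ ((p : ℝ≥0∞) ^ k)⁻¹ := by
      intro k
      obtain ⟨γ, hγ⟩ := (tendsto_atTop.1 hn_tend k).exists
      have hsing : {x} ⊆ pB p x γ := Set.singleton_subset_iff.2 (mem_pB_self x γ)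
      by_cases h : ν (pB p x γ) = 0
      · exact le_trans (measure_mono hsing) (by rw [h]; exact zero_le)
      · calc ν {x} ≤ ν (pB p x γ) := measure_mono hsing
          _ = ((p : ℝ≥0∞) ^ (n γ))⁻¹ := hK x γ h
          _ ≤ ((p : ℝ≥0∞) ^ k)⁻¹ := by
              apply ENNReal.inv_le_inv.2
              exact pow_le_pow_right₀ hp1' hγ
    have htend : Tendsto (fun k : ℕ => ((p : ℝ≥0∞) ^ k)⁻¹) atTop (nhds 0) := by
      have heq : (fun k : ℕ => ((p : ℝ≥0∞) ^ k)⁻¹) = fun k => ((p:ℝ≥0∞)⁻¹) ^ k := by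
        funext k; rw [ENNReal.inv_pow]
      rw [heq]
      exact ENNReal.tendsto_pow_atTop_nhds_zero_of_lt_one (ENNReal.inv_lt_one.2 hp1)
    have := ge_of_tendsto' htend hle
    exact le_antisymm this (zero_le)
  -- apply the mass distribution principle
  refine MeasureTheory.Measure.le_hausdorffMeasure _ _ ((p : ℝ≥0∞) ^ (-(γ0:ℤ))) ?_ ?_
  · exact ENNReal.zpow_pos (by positivity) (ENNReal.natCast_ne_top p) _
  intro s hs
  rcases s.eq_empty_or_nonempty with rfl | ⟨x, hxs⟩
  · simp
  rcases eq_or_ne (EMetric.diam s) 0 with hdiam | hdiam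
  · -- diameter zero: `s` is a subsingleton
    have hsub : s.Subsingleton := EMetric.diam_eq_zero_iff.1 hdiam
    have hss : s ⊆ {x} := fun y hy => by
      rw [Set.mem_singleton_iff]; exact hsub hy hxs
    calc ν s ≤ ν {x} := measure_mono hss
      _ = 0 := hatom x
      _ ≤ _ := zero_le
  -- positive diameter
  · have hdiam0 : 0 < EMetric.diam s := pos_iff_ne_zero.2 hdiam
    set A := {k : ℕ | (p:ℝ≥0∞) ^ (-(k:ℤ)) ≤ EMetric.diam s} with hA
    have hAne : A.Nonempty := by
      have htend : Tendsto (fun k : ℕ => (p:ℝ≥0∞) ^ (-(k:ℤ))) atTop (nhds 0) := by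
        have heq : (fun k : ℕ => (p:ℝ≥0∞) ^ (-(k:ℤ))) = fun k => ((p:ℝ≥0∞)⁻¹) ^ k := by
          funext k
          rw [ENNReal.zpow_neg, zpow_natCast,
            ENNReal.inv_pow]
        rw [heq]
        exact ENNReal.tendsto_pow_atTop_nhds_zero_of_lt_one (ENNReal.inv_lt_one.2 hp1)
      obtain ⟨k, hk⟩ := (htend.eventually_lt_const hdiam0).exists
      exact ⟨k, hk.le⟩
    set γ := sInf A with hγdef
    have hγA : (p:ℝ≥0∞) ^ (-(γ:ℤ)) ≤ EMetric.diam s := Nat.sInf_mem hAne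
    -- γ0 ≤ γ
    have hzs : ∀ a b : ℤ, a < b → (p:ℝ≥0∞) ^ a < (p:ℝ≥0∞) ^ b := by
      intro a b hab
      rw [← ENNReal.rpow_intCast, ← ENNReal.rpow_intCast]
      exact ENNReal.rpow_lt_rpow_of_exponent_lt hp1 (ENNReal.natCast_ne_top p)
        (by exact_mod_cast hab)
    have hγ0le : γ0 ≤ γ := by
      by_contra hcon
      push_neg at hcon
      exact absurd (lt_of_le_of_lt (le_trans hγA hs)
        (hzs _ _ (by omega : -(γ0:ℤ) < -(γ:ℤ)))) (lt_irrefl _)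
    -- s is contained in the ball of radius p^{-γ} around x
    have hsB : s ⊆ pB p x γ := by
      rcases Nat.eq_zero_or_pos γ with h0 | h0
      · intro y hy
        show ‖y - x‖ ≤ (p:ℝ) ^ (-(γ:ℤ))
        rw [h0]
        simpa using PadicInt.norm_le_one (y - x)
      · have hmemA : (γ - 1 : ℕ) ∉ A := Nat.notMem_of_lt_sInf (by omega)
        have hnotA : EMetric.diam s < (p:ℝ≥0∞) ^ (-((γ - 1 : ℕ):ℤ)) := by
          rw [hA] at hmemA
          exact lt_of_not_ge hmemA
        intro y hy
        show ‖y - x‖ ≤ (p:ℝ) ^ (-(γ:ℤ))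
        rw [PadicInt.norm_le_pow_iff_norm_lt_pow_add_one]
        have hed : edist y x ≤ EMetric.diam s := EMetric.edist_le_diam_of_mem hy hxs
        have h2 : edist y x < (p:ℝ≥0∞) ^ (-((γ - 1:ℕ):ℤ)) := lt_of_le_of_lt hed hnotA
        rw [edist_dist, ennreal_zpow_eq] at h2
        have hppos : (0:ℝ) < p := by exact_mod_cast hp.out.pos
        have h3 := (ENNReal.ofReal_lt_ofReal_iff (zpow_pos hppos _)).1 h2
        rw [dist_eq_norm] at h3
        have hexp : -((γ - 1:ℕ):ℤ) = -(γ:ℤ) + 1 := by omega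
        rwa [hexp] at h3
    -- measure estimate
    have hns : (d:ℝ) * γ ≤ (n γ : ℝ) := hγ0 γ hγ0le
    have hmes : ν s ≤ ((p:ℝ≥0∞) ^ (n γ))⁻¹ := by
      by_cases h : ν (pB p x γ) = 0
      · exact le_trans (measure_mono hsB) (by rw [h]; exact zero_le)
      · exact le_trans (measure_mono hsB) (le_of_eq (hK x γ h))
    refine le_trans hmes ?_
    calc ((p:ℝ≥0∞) ^ (n γ))⁻¹ = (p:ℝ≥0∞) ^ (-(n γ : ℝ)) := by
          rw [ENNReal.rpow_neg, ENNReal.rpow_natCast]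
      _ ≤ (p:ℝ≥0∞) ^ (-(γ:ℝ) * (d:ℝ)) :=
          ENNReal.rpow_le_rpow_of_exponent_le hp1' (by push_cast; nlinarith)
      _ = ((p:ℝ≥0∞) ^ (-(γ:ℝ))) ^ (d:ℝ) := by rw [← ENNReal.rpow_mul]
      _ = ((p:ℝ≥0∞) ^ (-(γ:ℤ))) ^ (d:ℝ) := by
          rw [← ENNReal.rpow_intCast (p:ℝ≥0∞) (-(γ:ℤ))]
          norm_num
      _ ≤ EMetric.diam s ^ (d:ℝ) := ENNReal.rpow_le_rpow hγA d.2


lemma upper [MeasurableSpace ℤ_[p]] [BorelSpace ℤ_[p]] (I : Set ℕ)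
    (ν : Measure ℤ_[p]) [IsProbabilityMeasure ν]
    (hK : ∀ x γ, ν (pB p x γ) ≠ 0 →
      ν (pB p x γ) = ((p : ℝ≥0∞) ^ (Nat.card ↥(I ∩ Set.Iio γ)))⁻¹)
    (d : ℝ≥0) (φ : ℕ → ℕ) (hφ : StrictMono φ)
    (hφd : ∀ k, (Nat.card ↥(I ∩ Set.Iio (φ k)) : ℝ) ≤ (d : ℝ) * (φ k)) :
    dimH {x : ℤ_[p] | ∀ γ, ν (pB p x γ) ≠ 0} ≤ (d : ℝ≥0∞) := by
  have hp1 : (1:ℝ≥0∞) < p := by exact_mod_cast hp.out.one_lt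
  have hp1' : (1:ℝ≥0∞) ≤ p := hp1.le
  have hppos : (0:ℝ) < p := by exact_mod_cast hp.out.pos
  set n : ℕ → ℕ := fun γ => Nat.card ↥(I ∩ Set.Iio γ) with hn
  set G : Set ℤ_[p] := {x | ∀ γ, ν (pB p x γ) ≠ 0} with hG
  apply dimH_le_of_hausdorffMeasure_ne_top (d := d)
  -- covering estimate
  set ι : ℕ → Type := fun k => {m : Fin (p ^ (φ k)) // ν (pB p ((m : ℕ) : ℤ_[p]) (φ k)) ≠ 0}
    with hι
  haveI : ∀ k, Countable (ι k) := fun k => Subtype.countable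
  have hcover : MeasureTheory.Measure.hausdorffMeasure (d:ℝ) G
      ≤ liminf (fun k => ∑' i : ι k,
          EMetric.diam (pB p ((i.1 : ℕ) : ℤ_[p]) (φ k)) ^ (d:ℝ)) atTop := by
    apply MeasureTheory.Measure.hausdorffMeasure_le_liminf_tsum (d:ℝ) G
      (fun k => ENNReal.ofReal ((p:ℝ) ^ (-(φ k : ℤ))))
    · -- radii tend to 0
      have hreal : Tendsto (fun k => (p:ℝ) ^ (-(φ k : ℤ))) atTop (nhds 0) := by
        have hbase : Tendsto (fun m : ℕ => ((p:ℝ)⁻¹) ^ m) atTop (nhds 0) :=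
          tendsto_pow_atTop_nhds_zero_of_lt_one (by positivity)
            (by rw [inv_lt_one_iff₀]; right; exact_mod_cast hp.out.one_lt)
        have heq : (fun k => (p:ℝ) ^ (-(φ k : ℤ))) = (fun m : ℕ => ((p:ℝ)⁻¹) ^ m) ∘ φ := by
          funext k
          simp only [Function.comp_apply]
          rw [zpow_neg, ← inv_zpow, zpow_natCast]
        rw [heq]
        exact hbase.comp hφ.tendsto_atTop
      have := ENNReal.tendsto_ofReal hreal
      rwa [ENNReal.ofReal_zero] at this
    · -- diameters bounded by radii
      exact Eventually.of_forall fun k i => diam_pB _ _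
    · -- covering
      refine Eventually.of_forall fun k => ?_
      intro x hx
      have hmlt : x.appr (φ k) < p ^ (φ k) := PadicInt.appr_lt x (φ k)
      have hνm : ν (pB p ((x.appr (φ k) : ℕ) : ℤ_[p]) (φ k)) ≠ 0 := by
        rw [← pB_appr x (φ k)]
        exact hx (φ k)
      exact Set.mem_iUnion.2 ⟨⟨⟨x.appr (φ k), hmlt⟩, hνm⟩, mem_pB_appr x (φ k)⟩
  -- bound each term of the liminf by 1
  have hbound : ∀ k, (∑' i : ι k,
      EMetric.diam (pB p ((i.1 : ℕ) : ℤ_[p]) (φ k)) ^ (d:ℝ)) ≤ 1 := by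
    intro k
    set γ := φ k with hγ
    set c : ℝ≥0∞ := (p:ℝ≥0∞) ^ ((n γ : ℝ) - (d:ℝ) * γ) with hc
    have hrw : ∀ i : ι k, (ENNReal.ofReal ((p:ℝ) ^ (-(γ : ℤ)))) ^ (d:ℝ)
        = c * ((p:ℝ≥0∞) ^ (n γ))⁻¹ := by
      intro i
      rw [← ennreal_zpow_eq (p := p), ← ENNReal.rpow_intCast (p:ℝ≥0∞) (-(γ:ℤ)),
        ← ENNReal.rpow_mul]
      have h1 : ((p:ℝ≥0∞) ^ (n γ))⁻¹ = (p:ℝ≥0∞) ^ (-(n γ : ℝ)) := by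
        rw [ENNReal.rpow_neg, ENNReal.rpow_natCast]
      rw [h1, hc, ← ENNReal.rpow_add _ _ (by positivity) (ENNReal.natCast_ne_top p)]
      congr 1
      push_cast
      ring
    have hterm : ∀ i : ι k, EMetric.diam (pB p ((i.1 : ℕ) : ℤ_[p]) γ) ^ (d:ℝ)
        ≤ c * ν (pB p ((i.1 : ℕ) : ℤ_[p]) γ) := by
      intro i
      rw [hK _ γ i.2, ← hrw i]
      exact ENNReal.rpow_le_rpow (diam_pB _ _) d.2
    have hdisj : Pairwise (Function.onFun (MeasureTheory.AEDisjoint ν)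
        fun i : ι k => pB p ((i.1 : ℕ) : ℤ_[p]) γ) := by
      intro i j hij
      have hne : (i.1 : ℕ) ≠ (j.1 : ℕ) := by
        intro h
        exact hij (Subtype.ext (Fin.ext h))
      have hd := pB_disjoint (p := p) i.1.isLt j.1.isLt hne
      exact (Set.disjoint_iff_inter_eq_empty.2 hd).aedisjoint
    calc (∑' i : ι k, EMetric.diam (pB p ((i.1 : ℕ) : ℤ_[p]) γ) ^ (d:ℝ))
        ≤ ∑' i : ι k, c * ν (pB p ((i.1 : ℕ) : ℤ_[p]) γ) := ENNReal.tsum_le_tsum hterm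
      _ = c * ∑' i : ι k, ν (pB p ((i.1 : ℕ) : ℤ_[p]) γ) := ENNReal.tsum_mul_left
      _ ≤ c * 1 := by
          gcongr
          have := MeasureTheory.tsum_measure_le_measure_univ
            (μ := ν) (s := fun i : ι k => pB p ((i.1 : ℕ) : ℤ_[p]) γ)
            (fun i => (measurableSet_pB _ _).nullMeasurableSet) hdisj
          simpa using this
      _ ≤ 1 := by
          rw [mul_one, hc]
          have hexp : (n γ : ℝ) - (d:ℝ) * γ ≤ 0 := by
            have := hφd k
            rw [← hγ] at this
            simp only [hn]
            linarith
          calc (p:ℝ≥0∞) ^ ((n γ : ℝ) - (d:ℝ) * γ) ≤ (p:ℝ≥0∞) ^ (0:ℝ) :=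
                ENNReal.rpow_le_rpow_of_exponent_le hp1' hexp
            _ = 1 := ENNReal.rpow_zero
  have hlim : liminf (fun k => ∑' i : ι k,
      EMetric.diam (pB p ((i.1 : ℕ) : ℤ_[p]) (φ k)) ^ (d:ℝ)) atTop ≤ 1 := by
    refine liminf_le_liminf (Eventually.of_forall hbound) |>.trans ?_
    simp [liminf_const]
  intro h
  rw [h] at hcover
  exact absurd (le_trans hcover hlim) (by simp)


end Stmt19Aux

/-- Let `ν` be the singular probability measure on `ℤ_p` obtained as the weak
limit of the uniform measures on nested `p`-homogeneous sets `C_γ` of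
`𝒯_{I_γ,J_γ}`-form (`I_γ = I ∩ {0,…,γ-1}`, `I ⊂ ℕ` infinite); it satisfies
`ν(B(x, p^{-γ})) = p^{-#I_γ}` for `x` in its support. Then the lower local
dimension of `ν` at every point of its support equals
`liminf_γ #I_γ/γ`, and consequently the lower Hausdorff dimension of `ν`
(namely `inf{dim_H A : ν(A) > 0}`) equals `liminf_γ #(I ∩ {0,…,γ-1})/γ`. -/
theorem stmt19 (p : ℕ) [Fact p.Prime] [MeasurableSpace ℤ_[p]] [BorelSpace ℤ_[p]]
    (I : Set ℕ) (hI : I.Infinite)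
    (S : (γ : ℕ) → Finset (Fin γ → Fin p))
    (hform : ∀ γ : ℕ, IsTIJForm p γ I (S γ))
    (hnested : ∀ γ : ℕ, ∀ t ∈ S (γ + 1), (fun i : Fin γ => t i.castSucc) ∈ S γ)
    (ν : Measure ℤ_[p]) [IsProbabilityMeasure ν]
    (hweak : ∀ f : BoundedContinuousFunction ℤ_[p] ℝ,
      Tendsto (fun γ : ℕ => (∑ t ∈ S γ, f (digitValZ p γ t)) / ((S γ).card : ℝ))
        atTop (nhds (∫ x, f x ∂ν)))
    (hball : ∀ x : ℤ_[p], (∀ γ : ℕ, ν {y : ℤ_[p] | ‖y - x‖ ≤ (p : ℝ) ^ (-(γ : ℤ))} ≠ 0) →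
      ∀ γ : ℕ, ν {y : ℤ_[p] | ‖y - x‖ ≤ (p : ℝ) ^ (-(γ : ℤ))}
        = ((p : ENNReal) ^ (Nat.card ↥(I ∩ Set.Iio γ)))⁻¹) :
    (∀ x : ℤ_[p], (∀ γ : ℕ, ν {y : ℤ_[p] | ‖y - x‖ ≤ (p : ℝ) ^ (-(γ : ℤ))} ≠ 0) →
      lowerLocalDim p ν x
        = Filter.liminf (fun γ : ℕ => (Nat.card ↥(I ∩ Set.Iio γ) : ℝ) / γ) atTop) ∧
    (⨅ (A : Set ℤ_[p]) (_ : ν A ≠ 0), dimH A)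
      = ENNReal.ofReal
          (Filter.liminf (fun γ : ℕ => (Nat.card ↥(I ∩ Set.Iio γ) : ℝ) / γ) atTop) := by
  classical
  have hK := Stmt19Aux.key_fact I ν hball
  have hntend := Stmt19Aux.ncard_tendsto I hI
  have hpart1 : ∀ x : ℤ_[p], (∀ γ : ℕ, ν {y : ℤ_[p] | ‖y - x‖ ≤ (p : ℝ) ^ (-(γ : ℤ))} ≠ 0) →
      lowerLocalDim p ν x
        = Filter.liminf (fun γ : ℕ => (Nat.card ↥(I ∩ Set.Iio γ) : ℝ) / γ) atTop := by
    intro x hx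
    exact Stmt19Aux.part1 I ν x (fun γ => hball x hx γ)
  refine ⟨hpart1, ?_⟩
  set g : ℕ → ℝ := fun γ : ℕ => (Nat.card ↥(I ∩ Set.Iio γ) : ℝ) / γ with hg
  have hg0 : ∀ γ, 0 ≤ g γ := fun γ => by positivity
  have hg1 : ∀ γ, g γ ≤ 1 := by
    intro γ
    rcases Nat.eq_zero_or_pos γ with h | h
    · simp [hg, h]
    · have hγ : (0:ℝ) < γ := by exact_mod_cast h
      rw [hg]
      rw [div_le_one hγ]
      exact_mod_cast Stmt19Aux.ncard_le I γ
  have hgbdd : IsBoundedUnder (· ≥ ·) atTop g := isBoundedUnder_of ⟨0, fun γ => hg0 γ⟩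
  have hgcbdd : IsCoboundedUnder (· ≥ ·) atTop g :=
    IsCoboundedUnder.of_frequently_le (a := 1)
      (Eventually.frequently (Eventually.of_forall hg1))
  set L : ℝ := liminf g atTop with hL
  have hL0 : 0 ≤ L := le_liminf_of_le hgcbdd (Eventually.of_forall hg0)
  set G : Set ℤ_[p] := {x : ℤ_[p] | ∀ γ : ℕ, ν (Stmt19Aux.pB p x γ) ≠ 0} with hGdef
  have hGν : ν G ≠ 0 := by
    have h2 : ν Set.univ ≤ ν G + ν Gᶜ := by
      rw [← Set.union_compl_self G]
      exact measure_union_le _ _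
    rw [hGdef, Stmt19Aux.null_compl ν, add_zero, measure_univ] at h2
    intro h0
    rw [hGdef] at h0
    rw [h0] at h2
    simp at h2
  apply le_antisymm
  · refine ENNReal.le_of_forall_pos_le_add fun ε hε _ => ?_
    set d : ℝ≥0 := L.toNNReal + ε with hd
    have hLd : L < (d:ℝ) := by
      have h1 : L ≤ (L.toNNReal : ℝ) := Real.le_coe_toNNReal L
      have hε' : (0:ℝ) < ε := hε
      rw [hd]
      push_cast
      linarith
    have hfreq : ∃ᶠ γ in atTop, g γ < (d:ℝ) := frequently_lt_of_liminf_lt hgcbdd hLd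
    have hfreq' : ∃ᶠ γ in atTop, (Nat.card ↥(I ∩ Set.Iio γ) : ℝ) ≤ (d:ℝ) * γ := by
      refine hfreq.mono fun γ hγ => ?_
      rcases Nat.eq_zero_or_pos γ with h0 | h0
      · have he : I ∩ Set.Iio γ = ∅ := by
          rw [h0]; ext a; simp
        simp [he]
        positivity
      · have hγ' : (0:ℝ) < γ := by exact_mod_cast h0
        rw [hg, div_lt_iff₀ hγ'] at hγ
        linarith
    obtain ⟨φ, hφmono, hφd⟩ := extraction_of_frequently_atTop hfreq'
    have hup := Stmt19Aux.upper I ν hK d φ hφmono hφd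
    calc (⨅ (A : Set ℤ_[p]) (_ : ν A ≠ 0), dimH A) ≤ dimH G := iInf₂_le G hGν
      _ ≤ (d : ℝ≥0∞) := hup
      _ = ENNReal.ofReal L + ε := by
          rw [hd, ENNReal.coe_add]
          rfl
  · refine le_iInf fun A => le_iInf fun hA => ?_
    refine ENNReal.le_of_forall_nnreal_lt fun r hr => ?_
    rcases eq_or_ne r 0 with rfl | hr0
    · simp
    have hrL : (r:ℝ) < L := by
      rw [show ENNReal.ofReal L = ((L.toNNReal : ℝ≥0) : ℝ≥0∞) from rfl,
        ENNReal.coe_lt_coe] at hr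
      have h2 := NNReal.coe_lt_coe.2 hr
      rwa [Real.coe_toNNReal L hL0] at h2
    have hev : ∀ᶠ γ in atTop, (r:ℝ) < g γ := eventually_lt_of_lt_liminf hrL hgbdd
    obtain ⟨γ0, hγ0⟩ := eventually_atTop.1 hev
    have hfro := Stmt19Aux.frostman I ν hK hntend r (zero_lt_iff.2 hr0) γ0 (by
      intro γ hγ
      have hlt := hγ0 γ hγ
      rcases Nat.eq_zero_or_pos γ with h0 | h0
      · rw [h0]; simp
      · have hγ' : (0:ℝ) < γ := by exact_mod_cast h0
        rw [hg, lt_div_iff₀ hγ'] at hlt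
        linarith)
    have hν_le : ν A ≤ (MeasureTheory.Measure.hausdorffMeasure (r:ℝ) : Measure ℤ_[p]) A :=
      MeasureTheory.Measure.le_iff'.1 hfro A
    have hne : (MeasureTheory.Measure.hausdorffMeasure (r:ℝ) : Measure ℤ_[p]) A ≠ 0 := by
      intro h0
      rw [h0] at hν_le
      exact hA (le_antisymm hν_le (zero_le))
    exact le_dimH_of_hausdorffMeasure_ne_zero hne
end
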